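/- For any axis-parallel rectangle B ⊂ ℤ^d and any ℓ∞-annulus R_k = {x ∈ ℤ^d : r ≤ ‖x‖_∞ < r'} (with 0 ≤ r < r'), the intersection B ∩ R_k can be partitioned into at most 2d mutually disjoint axis-parallel rectangles. -/
import Mathlib


/-- The `ℓ∞` norm of a lattice point. -/
def normInf {d : ℕ} (x : Fin d → ℤ) : ℕ := Finset.univ.sup fun i => (x i).natAbs

/-- An axis-parallel rectangle in `ℤ^d`: a product of integer intervals. -/
def axisRect {d : ℕ} (lo hi : Fin d → ℤ) : Set (Fin d → ℤ) :=
  {x | ∀ i, lo i ≤ x i ∧ x i ≤ hi i}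

lemma normInf_le_iff {d : ℕ} (hd : 0 < d) (x : Fin d → ℤ) (b : ℤ) :
    (normInf x : ℤ) ≤ b ↔ ∀ i, |x i| ≤ b := by
  rcases le_or_gt 0 b with hb | hb
  · obtain ⟨b', rfl⟩ := Int.eq_ofNat_of_zero_le hb
    unfold normInf
    rw [Int.ofNat_le, Finset.sup_le_iff]
    constructor
    · intro h i
      have := h i (Finset.mem_univ i)
      rw [Int.abs_eq_natAbs]
      exact_mod_cast this
    · intro h i _
      have := h i
      rw [Int.abs_eq_natAbs] at this
      exact_mod_cast this
  · constructor
    · intro h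
      have : (0:ℤ) ≤ (normInf x : ℤ) := Int.natCast_nonneg _
      omega
    · intro h
      have := h ⟨0, hd⟩
      have := abs_nonneg (x ⟨0, hd⟩)
      omega

lemma le_normInf_iff {d : ℕ} (x : Fin d → ℤ) (a : ℤ) (ha : 1 ≤ a) :
    a ≤ (normInf x : ℤ) ↔ ∃ i, a ≤ |x i| := by
  obtain ⟨a', rfl⟩ := Int.eq_ofNat_of_zero_le (by omega : (0:ℤ) ≤ a)
  unfold normInf
  rw [Int.ofNat_le, Finset.le_sup_iff (by exact_mod_cast ha : (⊥:ℕ) < a')]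
  constructor
  · rintro ⟨i, _, hi⟩
    exact ⟨i, by rw [Int.abs_eq_natAbs]; exact_mod_cast hi⟩
  · rintro ⟨i, hi⟩
    rw [Int.abs_eq_natAbs] at hi
    exact ⟨i, Finset.mem_univ i, by exact_mod_cast hi⟩

def loF {d : ℕ} (lo : Fin d → ℤ) (a b : ℤ) (i : Fin d) (s : Bool) : Fin d → ℤ :=
  fun j => if j < i then max (lo j) (1 - a)
    else if j = i then (if s then max (lo j) a else max (lo j) (-b))
    else max (lo j) (-b)

def hiF {d : ℕ} (hi : Fin d → ℤ) (a b : ℤ) (i : Fin d) (s : Bool) : Fin d → ℤ :=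
  fun j => if j < i then min (hi j) (a - 1)
    else if j = i then (if s then min (hi j) b else min (hi j) (-a))
    else min (hi j) b

lemma mem_rectF {d : ℕ} (lo hi : Fin d → ℤ) (a b : ℤ) (i : Fin d) (s : Bool) (x : Fin d → ℤ) :
    x ∈ axisRect (loF lo a b i s) (hiF hi a b i s) ↔
    ∀ j, (lo j ≤ x j ∧ x j ≤ hi j) ∧ (j < i → (1 - a ≤ x j ∧ x j ≤ a - 1)) ∧
      (i < j → (-b ≤ x j ∧ x j ≤ b)) ∧
      (j = i → (if s then a ≤ x j ∧ x j ≤ b else -b ≤ x j ∧ x j ≤ -a)) := by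
  unfold axisRect loF hiF
  simp only [Set.mem_setOf_eq]
  apply forall_congr'
  intro j
  rcases lt_trichotomy j i with h | h | h
  · simp only [if_pos h, max_le_iff, le_min_iff, h, h.ne, not_lt_of_gt h]
    cases s <;> simp <;> tauto
  · subst h
    simp only [lt_irrefl, if_neg (lt_irrefl j), if_pos rfl, max_le_iff, le_min_iff]
    cases s <;> simp <;> tauto
  · have h1 : ¬ j < i := not_lt_of_gt h
    have h2 : j ≠ i := ne_of_gt h
    simp only [if_neg h1, if_neg h2, max_le_iff, le_min_iff, h]
    cases s <;> simp [h2, not_lt_of_gt h, h] <;> tauto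

lemma disjF {d : ℕ} (lo hi : Fin d → ℤ) (a b : ℤ) (ha : 1 ≤ a) :
    ∀ q q' : Fin d × Bool, q ≠ q' →
      Disjoint (axisRect (loF lo a b q.1 q.2) (hiF hi a b q.1 q.2))
        (axisRect (loF lo a b q'.1 q'.2) (hiF hi a b q'.1 q'.2)) := by
  rintro ⟨i, s⟩ ⟨i', s'⟩ hne
  rw [Set.disjoint_left]
  intro x hx hx'
  rw [mem_rectF] at hx hx'
  rcases lt_trichotomy i i' with h | h | h
  · have h1 := (hx' i).2.1 h
    have h2 := (hx i).2.2.2 rfl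
    cases s <;> simp at h2 <;> omega
  · subst h
    have hss : s ≠ s' := by
      intro h; exact hne (by rw [h])
    have h1 := (hx i).2.2.2 rfl
    have h2 := (hx' i).2.2.2 rfl
    cases s <;> cases s' <;> simp only [Bool.false_eq_true, if_true, if_false] at h1 h2
    · exact hss rfl
    · omega
    · omega
    · exact hss rfl
  · have h1 := (hx i').2.1 h
    have h2 := (hx' i').2.2.2 rfl
    cases s' <;> simp at h2 <;> omega

lemma unionF_eq {d : ℕ} (hd : 0 < d) (lo hi : Fin d → ℤ) (a b : ℤ) (ha : 1 ≤ a) (hab : a ≤ b) :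
    (⋃ q : Fin d × Bool, axisRect (loF lo a b q.1 q.2) (hiF hi a b q.1 q.2)) =
      axisRect lo hi ∩ {x | a ≤ (normInf x : ℤ) ∧ (normInf x : ℤ) ≤ b} := by
  ext x
  simp only [Set.mem_iUnion, Set.mem_inter_iff, Set.mem_setOf_eq]
  rw [le_normInf_iff x a ha, normInf_le_iff hd]
  constructor
  · rintro ⟨⟨i, s⟩, hmem⟩
    rw [mem_rectF] at hmem
    have hib : if s = true then a ≤ x i ∧ x i ≤ b else -b ≤ x i ∧ x i ≤ -a :=
      (hmem i).2.2.2 rfl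
    refine ⟨fun j => (hmem j).1, ⟨i, ?_⟩, fun j => ?_⟩
    · cases s <;> simp at hib <;> [exact le_abs.mpr (Or.inr (by omega)); exact le_abs.mpr (Or.inl hib.1)]
    · rcases lt_trichotomy j i with h | h | h
      · have := (hmem j).2.1 h
        rw [abs_le]; omega
      · subst h
        cases s <;> simp at hib <;> rw [abs_le] <;> omega
      · have := (hmem j).2.2.1 h
        rw [abs_le]; omega
  · rintro ⟨hB, ⟨i0, hi0⟩, hb⟩
    classical
    obtain ⟨i, hiS, hmin⟩ : ∃ i : Fin d, a ≤ |x i| ∧ ∀ j, j < i → ¬ a ≤ |x j| := by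
      set S := Finset.univ.filter (fun j : Fin d => a ≤ |x j|) with hSdef
      have hS : S.Nonempty := ⟨i0, Finset.mem_filter.mpr ⟨Finset.mem_univ _, hi0⟩⟩
      refine ⟨S.min' hS, (Finset.mem_filter.mp (S.min'_mem hS)).2, ?_⟩
      intro j hj hja
      exact absurd hj (not_lt_of_ge (S.min'_le j (Finset.mem_filter.mpr ⟨Finset.mem_univ _, hja⟩)))
    have hmem : x ∈ axisRect (loF lo a b i (decide (0 ≤ x i))) (hiF hi a b i (decide (0 ≤ x i))) := by
      rw [mem_rectF]
      intro j
      refine ⟨hB j, fun hj => ?_, fun _ => ?_, fun hj => ?_⟩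
      · have h1 := hmin j hj
        push_neg at h1
        rw [abs_lt] at h1
        omega
      · rw [← abs_le]; exact hb j
      · subst hj
        have hbj := hb j
        rcases le_or_gt 0 (x j) with hxj | hxj
        · rw [abs_of_nonneg hxj] at hiS hbj
          simp [hxj, hiS, hbj]
        · rw [abs_of_neg hxj] at hiS hbj
          simp [not_le_of_gt hxj]
          omega
    exact ⟨⟨i, decide (0 ≤ x i)⟩, hmem⟩

/-- For any axis-parallel rectangle `B ⊂ ℤ^d` and any `ℓ∞`-annulus
`{x : r ≤ ‖x‖_∞ < r'}` (with `0 ≤ r < r'`), the intersection can be partitioned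
into at most `2d` mutually disjoint axis-parallel rectangles. -/
theorem annulus_inter_rect_partition (d : ℕ) (hd : 1 ≤ d)
    (lo hi : Fin d → ℤ) (r r' : ℝ) (hr : 0 ≤ r) (hrr' : r < r') :
    ∃ n : ℕ, n ≤ 2 * d ∧ ∃ p : Fin n → (Fin d → ℤ) × (Fin d → ℤ),
      (∀ i j, i ≠ j →
        Disjoint (axisRect (p i).1 (p i).2) (axisRect (p j).1 (p j).2)) ∧
      (⋃ i, axisRect (p i).1 (p i).2) =
        axisRect lo hi ∩ {x | r ≤ (normInf x : ℝ) ∧ (normInf x : ℝ) < r'} := by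
  set a : ℤ := ⌈r⌉ with ha_def
  set b : ℤ := ⌈r'⌉ - 1 with hb_def
  have ha0 : 0 ≤ a := Int.ceil_nonneg hr
  have hb0 : 0 ≤ b := by
    have : 0 < ⌈r'⌉ := Int.ceil_pos.mpr (lt_of_le_of_lt hr hrr')
    omega
  have hset : {x : Fin d → ℤ | r ≤ (normInf x : ℝ) ∧ (normInf x : ℝ) < r'} =
      {x | a ≤ (normInf x : ℤ) ∧ (normInf x : ℤ) ≤ b} := by
    ext x
    simp only [Set.mem_setOf_eq]
    have h1 : r ≤ ((normInf x : ℕ) : ℝ) ↔ a ≤ ((normInf x : ℕ) : ℤ) := by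
      rw [ha_def, show (((normInf x : ℕ)) : ℝ) = (((normInf x : ℕ) : ℤ) : ℝ) by push_cast; ring,
        Int.ceil_le]
    have h2 : ((normInf x : ℕ) : ℝ) < r' ↔ ((normInf x : ℕ) : ℤ) ≤ b := by
      rw [show (((normInf x : ℕ)) : ℝ) = (((normInf x : ℕ) : ℤ) : ℝ) by push_cast; ring,
        ← Int.lt_ceil]
      omega
    rw [h1, h2]
  rw [hset]
  rcases lt_or_ge b a with hba | hab
  · -- empty annulus
    refine ⟨0, by omega, Fin.elim0, fun i => i.elim0, ?_⟩
    rw [Set.iUnion_of_empty]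
    symm
    rw [Set.eq_empty_iff_forall_notMem]
    rintro x ⟨_, h1, h2⟩
    omega
  · rcases le_or_gt a 0 with ha1 | ha1
    · -- a ≤ 0: single clipped rectangle
      refine ⟨1, by omega, fun _ => (fun j => max (lo j) (-b), fun j => min (hi j) b), ?_, ?_⟩
      · intro i j hij
        exact absurd (Subsingleton.elim i j) hij
      · ext x
        simp only [Set.iUnion_const, Set.mem_inter_iff, Set.mem_setOf_eq]
        rw [normInf_le_iff (by omega) x b]
        have hna : a ≤ (normInf x : ℤ) := le_trans ha1 (Int.natCast_nonneg _)
        constructor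
        · intro h
          refine ⟨fun j => ⟨le_trans (le_max_left _ _) (h j).1,
            le_trans (h j).2 (min_le_left _ _)⟩, hna, fun j => ?_⟩
          have := h j
          rw [abs_le]
          constructor
          · exact le_trans (le_max_right _ _) this.1
          · exact le_trans this.2 (min_le_right _ _)
        · rintro ⟨hB, _, hb'⟩
          intro j
          have h1 := hB j
          have h2 := (abs_le.mp (hb' j))
          exact ⟨max_le h1.1 h2.1, le_min h1.2 h2.2⟩
    · -- 1 ≤ a ≤ b: 2d rectangles
      set e : Fin (2 * d) → Fin d × Bool := fun k =>
        if h : (k : ℕ) < d then (⟨k, h⟩, true) else (⟨(k : ℕ) - d, by omega⟩, false) with he_def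
      have he_inj : Function.Injective e := by
        intro k1 k2 h
        rw [he_def] at h
        simp only at h
        split_ifs at h with h1 h2 h2 <;>
          simp only [Prod.mk.injEq, Fin.mk.injEq] at h <;>
          [skip; exact absurd h.2 (by simp); exact absurd h.2 (by simp); skip] <;>
          · apply Fin.ext; omega
      have he_surj : Function.Surjective e := by
        rintro ⟨i, s⟩
        cases s
        · refine ⟨⟨d + i, by omega⟩, ?_⟩
          rw [he_def]
          simp only [dif_neg (by simp : ¬ ((⟨d + i, by omega⟩ : Fin (2*d)) : ℕ) < d)]
          congr 1
          apply Fin.ext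
          simp
        · refine ⟨⟨i, by omega⟩, ?_⟩
          rw [he_def]
          simp only [dif_pos (by simp [i.isLt] : ((⟨i, by omega⟩ : Fin (2*d)) : ℕ) < d)]
      refine ⟨2 * d, le_refl _,
        fun k => (loF lo a b (e k).1 (e k).2, hiF hi a b (e k).1 (e k).2), ?_, ?_⟩
      · intro k1 k2 hk
        exact disjF lo hi a b (by omega) (e k1) (e k2) (fun h => hk (he_inj h))
      · have := he_surj.iUnion_comp
          (fun q : Fin d × Bool => axisRect (loF lo a b q.1 q.2) (hiF hi a b q.1 q.2))
        simp only at this ⊢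
        rw [this, unionF_eq (by omega) lo hi a b (by omega) hab]
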